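/- Let A be an n×n binary matrix. The minimum over h ∈ ℝ₊ⁿ of the off-diagonal ℓ0 error |{(i,j) : i≠j, A_{ij} ≠ h_i h_j}| equals the minimum over h ∈ [0,1]ⁿ of the off-diagonal ℓ1 error ∑_{i≠j}|A_{ij} − h_i h_j|. -/

import Mathlib

open Classical

namespace Stmt4Aux

variable {n : ℕ}

noncomputable def cnt (A : Matrix (Fin n) (Fin n) ℝ) (h : Fin n → ℝ) : ℕ :=
  (Finset.univ.offDiag.filter
    (fun p : Fin n × Fin n => A p.1 p.2 ≠ h p.1 * h p.2)).card

noncomputable def L1 (A : Matrix (Fin n) (Fin n) ℝ) (h : Fin n → ℝ) : ℝ :=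
  ∑ p ∈ Finset.univ.offDiag, |A p.1 p.2 - h p.1 * h p.2|

lemma L1_eq_cnt (A : Matrix (Fin n) (Fin n) ℝ) (hA : ∀ i j, A i j = 0 ∨ A i j = 1)
    (h : Fin n → ℝ) (hb : ∀ i, h i = 0 ∨ h i = 1) : L1 A h = (cnt A h : ℝ) := by
  unfold L1 cnt
  rw [Finset.card_filter]
  push_cast
  apply Finset.sum_congr rfl
  intro p _
  rcases hA p.1 p.2 with h1 | h1 <;> rcases hb p.1 with h2 | h2 <;> rcases hb p.2 with h3 | h3 <;>
    simp [h1, h2, h3] <;> norm_num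

lemma cnt_round (A : Matrix (Fin n) (Fin n) ℝ) (hA : ∀ i j, A i j = 0 ∨ A i j = 1)
    (h : Fin n → ℝ) (hb : ∀ i, 0 ≤ h i) :
    cnt A (fun i => if 0 < h i then (1 : ℝ) else 0) ≤ cnt A h := by
  apply Finset.card_le_card
  intro p hp
  simp only [Finset.mem_filter] at hp ⊢
  refine ⟨hp.1, ?_⟩
  intro heq
  apply hp.2
  rcases hA p.1 p.2 with h1 | h1
  · rw [h1] at heq ⊢
    rcases mul_eq_zero.mp heq.symm with h2 | h2 <;> simp [h2]
  · rw [h1] at heq ⊢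
    have h2 : 0 < h p.1 := by
      rcases lt_or_eq_of_le (hb p.1) with h' | h'
      · exact h'
      · exfalso; rw [← h'] at heq; simp at heq
    have h3 : 0 < h p.2 := by
      rcases lt_or_eq_of_le (hb p.2) with h' | h'
      · exact h'
      · exfalso; rw [← h'] at heq; simp at heq
    rw [if_pos h2, if_pos h3, mul_one]

lemma key (c d t : ℝ) (hc : c = 0 ∨ c = 1) (hd0 : 0 ≤ d) (hd1 : d ≤ 1)
    (ht0 : 0 ≤ t) (ht1 : t ≤ 1) :
    |c - t * d| = (1 - t) * |c - 0 * d| + t * |c - 1 * d| := by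
  rcases hc with rfl | rfl
  · rw [abs_of_nonpos (by nlinarith), abs_of_nonpos (by nlinarith),
      abs_of_nonpos (by nlinarith)]
    ring
  · rw [abs_of_nonneg (by nlinarith), abs_of_nonneg (by nlinarith),
      abs_of_nonneg (by nlinarith)]
    ring

lemma L1_update (A : Matrix (Fin n) (Fin n) ℝ) (hA : ∀ i j, A i j = 0 ∨ A i j = 1)
    (h : Fin n → ℝ) (hb : ∀ i, 0 ≤ h i ∧ h i ≤ 1) (i : Fin n)
    (t : ℝ) (ht0 : 0 ≤ t) (ht1 : t ≤ 1) :
    L1 A (Function.update h i t) =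
      (1 - t) * L1 A (Function.update h i 0) + t * L1 A (Function.update h i 1) := by
  unfold L1
  rw [Finset.mul_sum, Finset.mul_sum, ← Finset.sum_add_distrib]
  apply Finset.sum_congr rfl
  intro p hp
  have hne : p.1 ≠ p.2 := (Finset.mem_offDiag.mp hp).2.2
  by_cases h1 : p.1 = i <;> by_cases h2 : p.2 = i
  · exact absurd (h1.trans h2.symm) hne
  · subst h1
    simp only [Function.update_self, Function.update_of_ne h2]
    exact key _ _ _ (hA p.1 p.2) (hb p.2).1 (hb p.2).2 ht0 ht1
  · subst h2
    simp only [Function.update_self, Function.update_of_ne h1]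
    rw [mul_comm (h p.1) t, mul_comm (h p.1) (0 : ℝ), mul_comm (h p.1) (1 : ℝ)]
    exact key _ _ _ (hA p.1 p.2) (hb p.1).1 (hb p.1).2 ht0 ht1
  · simp only [Function.update_of_ne h1, Function.update_of_ne h2]
    ring

lemma L1_round (A : Matrix (Fin n) (Fin n) ℝ) (hA : ∀ i j, A i j = 0 ∨ A i j = 1)
    (s : Finset (Fin n)) :
    ∀ h : Fin n → ℝ, (∀ i, 0 ≤ h i ∧ h i ≤ 1) →
      (∀ i, i ∉ s → h i = 0 ∨ h i = 1) →
      ∃ h' : Fin n → ℝ, (∀ i, h' i = 0 ∨ h' i = 1) ∧ L1 A h' ≤ L1 A h := by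
  induction s using Finset.induction_on with
  | empty =>
    intro h hb hbin
    exact ⟨h, fun i => hbin i (by simp), le_refl _⟩
  | @insert a s ha ih =>
    intro h hb hbin
    have hinterp : L1 A h =
        (1 - h a) * L1 A (Function.update h a 0) + h a * L1 A (Function.update h a 1) := by
      conv_lhs => rw [← Function.update_eq_self a h]
      exact L1_update A hA h hb a (h a) (hb a).1 (hb a).2
    set b : ℝ := if L1 A (Function.update h a 0) ≤ L1 A (Function.update h a 1) then 0 else 1
      with hbdef
    have hble : L1 A (Function.update h a b) ≤ L1 A h := by
      by_cases hc : L1 A (Function.update h a 0) ≤ L1 A (Function.update h a 1)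
      · rw [hbdef, if_pos hc, hinterp]
        nlinarith [(hb a).1, (hb a).2]
      · push_neg at hc
        rw [hbdef, if_neg (not_le.mpr hc), hinterp]
        nlinarith [(hb a).1, (hb a).2]
    have hbbin : b = 0 ∨ b = 1 := by
      rw [hbdef]; split <;> simp
    have hb' : ∀ i, 0 ≤ Function.update h a b i ∧ Function.update h a b i ≤ 1 := by
      intro i
      by_cases hi : i = a
      · subst hi
        rcases hbbin with h'' | h'' <;> rw [Function.update_self, h''] <;> norm_num
      · rw [Function.update_of_ne hi]; exact hb i
    have hbin' : ∀ i, i ∉ s → Function.update h a b i = 0 ∨ Function.update h a b i = 1 := by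
      intro i hi
      by_cases hia : i = a
      · subst hia; rw [Function.update_self]; exact hbbin
      · rw [Function.update_of_ne hia]
        exact hbin i (by simp [hia, hi])
    obtain ⟨h', hh'bin, hh'le⟩ := ih (Function.update h a b) hb' hbin'
    exact ⟨h', hh'bin, hh'le.trans hble⟩

end Stmt4Aux

open Stmt4Aux

theorem stmt4 (n : ℕ) (A : Matrix (Fin n) (Fin n) ℝ)
    (hA : ∀ i j, A i j = 0 ∨ A i j = 1) :
    sInf {y : ℝ | ∃ h : Fin n → ℝ, (∀ i, 0 ≤ h i) ∧
        y = ((Finset.univ.offDiag.filter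
          (fun p : Fin n × Fin n => A p.1 p.2 ≠ h p.1 * h p.2)).card : ℝ)} =
      sInf {y : ℝ | ∃ h : Fin n → ℝ, (∀ i, 0 ≤ h i ∧ h i ≤ 1) ∧
        y = ∑ p ∈ Finset.univ.offDiag, |A p.1 p.2 - h p.1 * h p.2|} := by
  set S0 : Set ℝ := {y : ℝ | ∃ h : Fin n → ℝ, (∀ i, 0 ≤ h i) ∧
    y = ((Finset.univ.offDiag.filter
      (fun p : Fin n × Fin n => A p.1 p.2 ≠ h p.1 * h p.2)).card : ℝ)} with hS0
  set S1 : Set ℝ := {y : ℝ | ∃ h : Fin n → ℝ, (∀ i, 0 ≤ h i ∧ h i ≤ 1) ∧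
    y = ∑ p ∈ Finset.univ.offDiag, |A p.1 p.2 - h p.1 * h p.2|} with hS1
  have hmem0 : ∀ h : Fin n → ℝ, (∀ i, 0 ≤ h i) → ((cnt A h : ℝ)) ∈ S0 := by
    intro h hb
    exact ⟨h, hb, rfl⟩
  have hmem1 : ∀ h : Fin n → ℝ, (∀ i, 0 ≤ h i ∧ h i ≤ 1) → L1 A h ∈ S1 := by
    intro h hb
    exact ⟨h, hb, rfl⟩
  have hne0 : S0.Nonempty := ⟨_, hmem0 (fun _ => 0) (fun _ => le_refl 0)⟩
  have hne1 : S1.Nonempty := ⟨_, hmem1 (fun _ => 0) (fun _ => ⟨le_refl 0, zero_le_one⟩)⟩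
  have hbdd0 : BddBelow S0 := by
    refine ⟨0, ?_⟩
    rintro y ⟨h, _, rfl⟩
    positivity
  have hbdd1 : BddBelow S1 := by
    refine ⟨0, ?_⟩
    rintro y ⟨h, _, rfl⟩
    positivity
  apply le_antisymm
  · -- sInf S0 ≤ sInf S1
    apply le_csInf hne1
    rintro y ⟨h, hb, rfl⟩
    obtain ⟨h', hbin, hle⟩ := L1_round A hA Finset.univ h hb (fun i hi => absurd (Finset.mem_univ i) hi)
    rw [L1_eq_cnt A hA h' hbin] at hle
    refine le_trans (csInf_le hbdd0 (hmem0 h' ?_)) hle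
    intro i
    rcases hbin i with h' | h' <;> rw [h'] <;> norm_num
  · -- sInf S1 ≤ sInf S0
    apply le_csInf hne0
    rintro y ⟨h, hb, rfl⟩
    have hle := cnt_round A hA h hb
    set h' : Fin n → ℝ := fun i => if 0 < h i then (1 : ℝ) else 0 with hh'
    have hbin : ∀ i, h' i = 0 ∨ h' i = 1 := by
      intro i; rw [hh']; dsimp only; split <;> simp
    have hb' : ∀ i, 0 ≤ h' i ∧ h' i ≤ 1 := by
      intro i; rcases hbin i with h'' | h'' <;> rw [h''] <;> norm_num
    have hmem := hmem1 h' hb'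
    rw [L1_eq_cnt A hA h' hbin] at hmem
    refine le_trans (csInf_le hbdd1 hmem) ?_
    exact_mod_cast hle
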